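/- Let m, n be positive integers with m ≥ 2, let G = C_m ⊕ C_{mn}, let {e_1, e_2} be a basis of G with ord(e_1) = m and ord(e_2) = mn, let x be an integer with gcd(x, m) = 1, and let s ∈ [1, n]. Then the sequence S = e_1^{m-1} · e_2^{sm-1} · (−x·e_1 + e_2)^{(n+1−s)m−1} has length 2m + mn − 3 (which equals η(G) − 1) and has no short zero-sum subsequence. -/

import Mathlib

/-- The sequence `e₁^{m-1} e₂^{sm-1} (-x e₁ + e₂)^{(n+1-s)m-1}` over
`C_m ⊕ C_{mn}` has length `2m + mn - 3 = η(G) - 1` and no short zero-sum subsequence. -/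
theorem stmt_0 (m n : ℕ) (hm : 2 ≤ m) (hn : 0 < n)
    (e1 e2 : ZMod m × ZMod (m * n))
    (he1 : addOrderOf e1 = m) (he2 : addOrderOf e2 = m * n)
    (hind : ∀ a b : ℤ, a • e1 + b • e2 = 0 → a • e1 = 0 ∧ b • e2 = 0)
    (hgen : AddSubgroup.closure ({e1, e2} : Set (ZMod m × ZMod (m * n))) = ⊤)
    (x : ℤ) (hx : Int.gcd x m = 1)
    (s : ℕ) (hs1 : 1 ≤ s) (hsn : s ≤ n) :
    (Multiset.replicate (m - 1) e1 + Multiset.replicate (s * m - 1) e2 +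
        Multiset.replicate ((n + 1 - s) * m - 1) ((-x) • e1 + e2)).card
      = 2 * m + m * n - 3 ∧
    ¬ ∃ T ≤ Multiset.replicate (m - 1) e1 + Multiset.replicate (s * m - 1) e2 +
        Multiset.replicate ((n + 1 - s) * m - 1) ((-x) • e1 + e2),
        T ≠ 0 ∧ T.sum = 0 ∧ Multiset.card T ≤ m * n := by
  set g : ZMod m × ZMod (m * n) := (-x) • e1 + e2 with hg
  have hne1 : e1 ≠ 0 := by
    intro h; rw [h, addOrderOf_zero] at he1; omega
  have hne2 : e2 ≠ 0 := by
    intro h; rw [h, addOrderOf_zero] at he2; nlinarith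
  have h12 : e1 ≠ e2 := by
    intro h
    have := (hind 1 (-1) (by rw [h]; simp)).1
    simp at this; exact hne1 this
  have hge1 : g ≠ e1 := by
    intro h
    have : (-x - 1) • e1 + (1 : ℤ) • e2 = 0 := by
      have : ((-x) • e1 + e2) - e1 = 0 := by rw [← hg, h]; simp
      rw [← this]; module
    have := (hind _ _ this).2
    simp at this; exact hne2 this
  have hge2 : g ≠ e2 := by
    intro h
    have hz : (-x) • e1 + (0 : ℤ) • e2 = 0 := by
      have : ((-x) • e1 + e2) - e2 = 0 := by rw [← hg, h]; simp
      rw [← this]; module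
    have h1 := (hind _ _ hz).1
    rw [← addOrderOf_dvd_iff_zsmul_eq_zero, he1] at h1
    have : (m : ℤ) ∣ x := (dvd_neg.mp h1)
    have : (m : ℤ) ∣ Int.gcd x m := Int.dvd_coe_gcd this (dvd_refl _)
    rw [hx] at this
    have := Int.le_of_dvd one_pos this
    omega
  have hsm : 1 ≤ s * m := Nat.one_le_iff_ne_zero.mpr (by positivity)
  have hsm' : 1 ≤ (n + 1 - s) * m := Nat.one_le_iff_ne_zero.mpr (by
    have : n + 1 - s ≠ 0 := by omega
    positivity)
  have hmn : m * n = n * m := Nat.mul_comm m n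
  have hsum : s * m + (n + 1 - s) * m = n * m + m := by
    have h' : s + (n + 1 - s) = n + 1 := by omega
    rw [← add_mul, h']; ring
  have hmle : m ≤ n * m := Nat.le_mul_of_pos_left m hn
  constructor
  · simp only [Multiset.card_add, Multiset.card_replicate]
    omega
  · rintro ⟨T, hTle, hT0, hTsum, hTcard⟩
    set a := T.count e1 with ha
    set b := T.count e2 with hb
    set c := T.count g with hc
    -- bounds on counts
    have hca : a ≤ m - 1 := by
      have := Multiset.count_le_of_le e1 hTle
      simpa [Multiset.count_add, Multiset.count_replicate, h12, Ne.symm h12,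
        hge1, Ne.symm hge1, hge2, Ne.symm hge2] using this
    have hcb : b ≤ s * m - 1 := by
      have := Multiset.count_le_of_le e2 hTle
      simpa [Multiset.count_add, Multiset.count_replicate, h12, Ne.symm h12,
        hge1, Ne.symm hge1, hge2, Ne.symm hge2] using this
    have hcc : c ≤ (n + 1 - s) * m - 1 := by
      have := Multiset.count_le_of_le g hTle
      simpa [Multiset.count_add, Multiset.count_replicate, h12, Ne.symm h12,
        hge1, Ne.symm hge1, hge2, Ne.symm hge2] using this
    -- T is exactly a copies of e1, b of e2, c of g
    have hT : T = Multiset.replicate a e1 + Multiset.replicate b e2 +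
        Multiset.replicate c g := by
      ext y
      simp only [Multiset.count_add, Multiset.count_replicate]
      by_cases h1 : y = e1
      · subst h1
        rw [if_neg (Ne.symm h12), if_neg hge1]
        simp [ha]
      · by_cases h2 : y = e2
        · subst h2
          rw [if_neg h12, if_neg hge2]
          simp [hb, h1]
        · by_cases h3 : y = g
          · subst h3
            rw [if_neg (Ne.symm hge1), if_neg (Ne.symm hge2), if_pos rfl]
            simp [hc]
          · rw [if_neg (Ne.symm h1), if_neg (Ne.symm h2), if_neg (Ne.symm h3)]
            rw [Multiset.count_eq_zero]
            intro hy
            have := Multiset.mem_of_le hTle hy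
            simp only [Multiset.mem_add, Multiset.mem_replicate] at this
            rcases this with (⟨_, h⟩ | ⟨_, h⟩) | ⟨_, h⟩ <;> tauto
    have hcard : Multiset.card T = a + b + c := by
      rw [hT]; simp
    have hpos : 1 ≤ a + b + c := by
      rw [← hcard]; exact Multiset.card_pos.mpr hT0
    -- sum equation
    have hsum0 : ((a : ℤ) - c * x) • e1 + ((b : ℤ) + c) • e2 = 0 := by
      have hTs : T.sum = a • e1 + b • e2 + c • g := by
        rw [hT]; simp [Multiset.sum_replicate]
      rw [hTs] at hTsum
      rw [← hTsum, hg]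
      module
    have h1 := (hind _ _ hsum0).1
    have h2 := (hind _ _ hsum0).2
    rw [← addOrderOf_dvd_iff_zsmul_eq_zero, he1] at h1
    rw [← addOrderOf_dvd_iff_zsmul_eq_zero, he2] at h2
    have h2n : m * n ∣ b + c := by
      have : ((m * n : ℕ) : ℤ) ∣ ((b + c : ℕ) : ℤ) := by push_cast; exact_mod_cast h2
      exact_mod_cast this
    by_cases hbc : b + c = 0
    · -- then m ∣ a with 1 ≤ a ≤ m - 1
      have hc0 : c = 0 := by omega
      have hb0 : b = 0 := by omega
      rw [hc0] at h1
      have h1' : (m : ℤ) ∣ (a : ℤ) := by simpa using h1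
      have hma : m ∣ a := by exact_mod_cast h1'
      have ha1 : 1 ≤ a := by omega
      have := Nat.le_of_dvd (by omega) hma
      omega
    · -- b + c = mn
      rcases h2n with ⟨k, hk⟩
      have hub : b + c ≤ n * m + m - 2 := by omega
      have hk1 : k ≠ 0 := by
        rintro rfl; simp at hk; omega
      have hk2 : k < 2 := by
        by_contra h
        push_neg at h
        have : m * n * 2 ≤ m * n * k := Nat.mul_le_mul_left _ h
        omega
      have hbceq : b + c = m * n := by
        have : k = 1 := by omega
        rw [this, mul_one] at hk; exact hk
      have ha0 : a = 0 := by omega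
      rw [ha0] at h1
      have hmc : (m : ℤ) ∣ (c : ℤ) * x := by
        have : (m : ℤ) ∣ -((c : ℤ) * x) := by
          simpa using h1
        exact dvd_neg.mp this
      have hcop : IsCoprime (m : ℤ) x := by
        rw [Int.isCoprime_iff_gcd_eq_one, Int.gcd_comm]; exact hx
      have hmc' : (m : ℤ) ∣ (c : ℤ) := hcop.dvd_of_dvd_mul_right hmc
      have hmcN : m ∣ c := by exact_mod_cast hmc'
      -- but (n-s)*m < c < (n+1-s)*m
      have h' : (n - s) * m + s * m = n * m := by
        rw [← add_mul]; congr 1; omega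
      have hclb : (n - s) * m + 1 ≤ c := by omega
      rcases hmcN with ⟨k', hk'⟩
      have hklb : n - s < k' := by
        by_contra h
        push_neg at h
        have : m * k' ≤ m * (n - s) := Nat.mul_le_mul_left _ h
        rw [Nat.mul_comm m (n - s)] at this
        omega
      have hkub : k' < n + 1 - s := by
        by_contra h
        push_neg at h
        have : m * (n + 1 - s) ≤ m * k' := Nat.mul_le_mul_left _ h
        rw [Nat.mul_comm m (n + 1 - s)] at this
        omega
      omega
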